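/- Let Ω ⊆ ℝ³ be open and let α, β be set functions defined on the open subsets of Ω with values in [0,+∞], both increasing (i.e. vanishing on the empty set and monotone with respect to inclusion). Assume: (i) α(A′ ∪ B) ≤ α(A) + β(B) whenever A′, A, B are open subsets of Ω with the closure of A′ compact and contained in A; (ii) there exists a nonnegative Lebesgue-integrable function g on Ω such that β(A) ≤ ∫_A g dx for every open A ⊆ Ω. Then α is inner regular: for every open A ⊆ Ω, α(A) = sup{ α(B) : B open, closure of B compact and contained in A }. -/
import Mathlib


open MeasureTheory

/-- Inner regularity of an increasing set function `α` satisfying an almost-subadditivity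
estimate with respect to a set function `β` dominated by an integral. -/
theorem innerRegular_of_almost_subadditive
    (Ω : Set (Fin 3 → ℝ)) (hΩ : IsOpen Ω)
    (α β : Set (Fin 3 → ℝ) → ENNReal)
    (hα0 : α ∅ = 0) (hβ0 : β ∅ = 0)
    (hαmono : ∀ A B : Set (Fin 3 → ℝ), IsOpen A → IsOpen B → A ⊆ Ω → B ⊆ Ω →
      A ⊆ B → α A ≤ α B)
    (hβmono : ∀ A B : Set (Fin 3 → ℝ), IsOpen A → IsOpen B → A ⊆ Ω → B ⊆ Ω →
      A ⊆ B → β A ≤ β B)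
    (hsub : ∀ A' A B : Set (Fin 3 → ℝ), IsOpen A' → IsOpen A → IsOpen B →
      A' ⊆ Ω → A ⊆ Ω → B ⊆ Ω → IsCompact (closure A') → closure A' ⊆ A →
      α (A' ∪ B) ≤ α A + β B)
    (g : (Fin 3 → ℝ) → ℝ) (hg : ∀ x, 0 ≤ g x) (hgint : IntegrableOn g Ω)
    (hβg : ∀ A : Set (Fin 3 → ℝ), IsOpen A → A ⊆ Ω →
      β A ≤ ENNReal.ofReal (∫ x in A, g x)) :
    ∀ A : Set (Fin 3 → ℝ), IsOpen A → A ⊆ Ω →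
      α A = ⨆ (B : Set (Fin 3 → ℝ)) (_ : IsOpen B) (_ : IsCompact (closure B))
        (_ : closure B ⊆ A), α B := by
  intro A hA hAΩ
  set S := ⨆ (B : Set (Fin 3 → ℝ)) (_ : IsOpen B) (_ : IsCompact (closure B))
      (_ : closure B ⊆ A), α B with hSdef
  refine le_antisymm ?_ ?_
  · -- hard direction
    refine ENNReal.le_of_forall_pos_le_add fun ε hε hStop => ?_
    -- compact exhaustion of A
    set K : ℕ → Set (Fin 3 → ℝ) :=
      fun n => (Metric.thickening ((n : ℝ) + 1)⁻¹ Aᶜ)ᶜ ∩ Metric.closedBall 0 n with hKdef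
    have hKmeas : ∀ n, MeasurableSet (K n) := fun n =>
      ((Metric.isOpen_thickening.isClosed_compl).measurableSet).inter
        Metric.isClosed_closedBall.measurableSet
    have hKcomp : ∀ n, IsCompact (K n) := by
      intro n
      exact (isCompact_closedBall 0 n).of_isClosed_subset
        (Metric.isOpen_thickening.isClosed_compl.inter Metric.isClosed_closedBall)
        Set.inter_subset_right
    have hKA : ∀ n, K n ⊆ A := by
      intro n x hx
      by_contra hxA
      exact hx.1 (Metric.self_subset_thickening (by positivity) Aᶜ hxA)
    have hKmono : Monotone K := by
      intro m n hmn
      apply Set.inter_subset_inter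
      · exact Set.compl_subset_compl.2 (Metric.thickening_mono
          (by
            have : (m : ℝ) + 1 ≤ (n : ℝ) + 1 := by exact_mod_cast Nat.succ_le_succ hmn
            exact inv_anti₀ (by positivity) this) Aᶜ)
      · exact Metric.closedBall_subset_closedBall (by exact_mod_cast hmn)
    have hKunion : (⋃ n, K n) = A := by
      apply Set.Subset.antisymm (Set.iUnion_subset hKA)
      intro x hx
      have hxe : EMetric.infEdist x Aᶜ ≠ 0 := by
        intro h0
        have hcl := EMetric.mem_closure_iff_infEdist_zero.2 h0
        rw [hA.isClosed_compl.closure_eq] at hcl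
        exact hcl hx
      obtain ⟨n, hn⟩ := ENNReal.exists_inv_nat_lt hxe
      obtain ⟨m, hm⟩ := exists_nat_ge ‖x‖
      refine Set.mem_iUnion.2 ⟨max n m, ?_, ?_⟩
      · intro hmem
        rw [Metric.mem_thickening_iff_infEdist_lt] at hmem
        have h1 : (ENNReal.ofReal ((((max n m : ℕ) : ℝ)) + 1)⁻¹) ≤ ((n : ℕ) : ENNReal)⁻¹ := by
          rw [ENNReal.ofReal_inv_of_pos (by positivity)]
          apply ENNReal.inv_le_inv'
          rw [ENNReal.ofReal_add (by positivity) zero_le_one,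
            ENNReal.ofReal_natCast, ENNReal.ofReal_one]
          exact_mod_cast (Nat.le_max_left n m).trans (Nat.le_succ _)
        exact (lt_irrefl _ ((hmem.trans_le h1).trans hn)).elim
      · rw [Metric.mem_closedBall, dist_zero_right]
        calc ‖x‖ ≤ m := hm
          _ ≤ ((max n m : ℕ) : ℝ) := by exact_mod_cast Nat.le_max_right n m
    -- integrability on A
    have hgintA : IntegrableOn g A := hgint.mono_set hAΩ
    -- integrals over K n converge to integral over A
    have htend : Filter.Tendsto (fun n => ∫ x in K n, g x) Filter.atTop
        (nhds (∫ x in A, g x)) := by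
      have := MeasureTheory.tendsto_setIntegral_of_monotone hKmeas hKmono
        (by rw [hKunion]; exact hgintA)
      rwa [hKunion] at this
    have htend0 : Filter.Tendsto (fun n => ∫ x in A \ K n, g x) Filter.atTop (nhds 0) := by
      have heq : ∀ n, ∫ x in A \ K n, g x = (∫ x in A, g x) - ∫ x in K n, g x := fun n =>
        MeasureTheory.integral_diff (hKmeas n) hgintA (hKA n)
      simp only [heq]
      simpa using htend.const_sub (∫ x in A, g x)
    have hev : ∀ᶠ n in Filter.atTop, ∫ x in A \ K n, g x < ε := by
      have := htend0.eventually (eventually_lt_nhds (show (0:ℝ) < ε from hε))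
      exact this
    obtain ⟨n, hn⟩ := hev.exists
    -- sandwich compacts
    obtain ⟨L, hLcomp, hKL, hLA⟩ := exists_compact_between (hKcomp n) hA (hKA n)
    obtain ⟨L', hL'comp, hLL', hL'A⟩ := exists_compact_between hLcomp hA hLA
    set U := interior L with hUdef
    set V := interior L' with hVdef
    have hUA : U ⊆ A := interior_subset.trans hLA
    have hVA : V ⊆ A := interior_subset.trans hL'A
    have hclU : closure U ⊆ L := by
      rw [← hLcomp.isClosed.closure_eq]
      exact closure_mono interior_subset
    have hclUcomp : IsCompact (closure U) := hLcomp.of_isClosed_subset isClosed_closure hclU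
    have hclUV : closure U ⊆ V := hclU.trans hLL'
    have hclV : closure V ⊆ L' := by
      rw [← hL'comp.isClosed.closure_eq]
      exact closure_mono interior_subset
    have hclVcomp : IsCompact (closure V) := hL'comp.of_isClosed_subset isClosed_closure hclV
    have hclVA : closure V ⊆ A := hclV.trans hL'A
    have hAeq : A = U ∪ (A \ K n) := by
      apply Set.Subset.antisymm
      · intro x hx
        by_cases hxK : x ∈ K n
        · exact Or.inl (hKL hxK)
        · exact Or.inr ⟨hx, hxK⟩
      · exact Set.union_subset hUA Set.diff_subset
    have hdiffopen : IsOpen (A \ K n) := hA.sdiff ((hKcomp n).isClosed)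
    have hdiffΩ : (A \ K n) ⊆ Ω := Set.diff_subset.trans hAΩ
    have hstep : α A ≤ α V + β (A \ K n) := by
      have h := hsub U V (A \ K n) isOpen_interior isOpen_interior hdiffopen
        (hUA.trans hAΩ) (hVA.trans hAΩ) hdiffΩ hclUcomp hclUV
      calc α A = α (U ∪ (A \ K n)) := by rw [← hAeq]
        _ ≤ α V + β (A \ K n) := h
    have hαVS : α V ≤ S := by
      rw [hSdef]
      exact le_iSup_of_le V <| le_iSup_of_le isOpen_interior <|
        le_iSup_of_le hclVcomp <| le_iSup_of_le hclVA le_rfl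
    have hβbound : β (A \ K n) ≤ ε := by
      calc β (A \ K n) ≤ ENNReal.ofReal (∫ x in A \ K n, g x) :=
            hβg _ hdiffopen hdiffΩ
        _ ≤ ENNReal.ofReal ε := ENNReal.ofReal_le_ofReal hn.le
        _ = (ε : ENNReal) := ENNReal.ofReal_coe_nnreal
    calc α A ≤ α V + β (A \ K n) := hstep
      _ ≤ S + ε := add_le_add hαVS hβbound
  · refine iSup_le fun B => iSup_le fun hB => iSup_le fun hBc => iSup_le fun hBA => ?_
    have hBsub : B ⊆ A := subset_closure.trans hBA
    exact hαmono B A hB hA (hBsub.trans hAΩ) hAΩ hBsub
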